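/- Let n_1 ≥ 1 and define w : {0,…,n_1−1} × {0,1} → ℝ by w(i,j) = 2n_1 − i if i+j is even, and w(i,j) = i+1 if i+j is odd. Let I = [2n_1, 2n_1 + 2]. Then for all distinct vertices (i,j), (i',j') of the grid G_{n_1,2}, w(i,j) + w(i',j') ∈ I if and only if |i−i'| + |j−j'| = 1. -/

import Mathlib

/-- The 2-dimensional grid graph on `Fin n₁ × Fin n₂`: two vertices are adjacent
iff they differ by exactly 1 in exactly one coordinate. -/
def gridGraph (n₁ n₂ : ℕ) : SimpleGraph (Fin n₁ × Fin n₂) where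
  Adj u v := |(u.1 : ℤ) - v.1| + |(u.2 : ℤ) - v.2| = 1
  symm := by constructor; intro u v h; simpa [abs_sub_comm] using h
  loopless := by constructor; intro u h; simp at h

theorem stmt7 (n₁ : ℕ) (hn₁ : 1 ≤ n₁) (w : Fin n₁ × Fin 2 → ℝ)
    (hw : ∀ u : Fin n₁ × Fin 2, w u =
      if Even ((u.1 : ℕ) + (u.2 : ℕ)) then 2 * (n₁ : ℝ) - (u.1 : ℕ)
      else (u.1 : ℕ) + 1) :
    ∀ u v : Fin n₁ × Fin 2, u ≠ v →
      (w u + w v ∈ Set.Icc (2 * (n₁ : ℝ)) (2 * (n₁ : ℝ) + 2) ↔ (gridGraph n₁ 2).Adj u v) := by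
  have hw' : ∀ u : Fin n₁ × Fin 2, w u =
      (((if Even ((u.1 : ℕ) + (u.2 : ℕ)) then 2 * (n₁ : ℤ) - (u.1 : ℕ)
        else (u.1 : ℕ) + 1) : ℤ) : ℝ) := by
    intro u; rw [hw]; split_ifs <;> push_cast <;> ring
  intro u v huv
  obtain ⟨i, j⟩ := u
  obtain ⟨i', j'⟩ := v
  have hi := i.isLt
  have hi' := i'.isLt
  have hj := j.isLt
  have hj' := j'.isLt
  have hne : ¬((i : ℕ) = (i' : ℕ) ∧ (j : ℕ) = (j' : ℕ)) := by
    rintro ⟨h1, h2⟩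
    exact huv (Prod.ext (Fin.ext h1) (Fin.ext h2))
  simp only [hw', gridGraph, Set.mem_Icc, ← Int.cast_add]
  rw [show (2 * (n₁ : ℝ)) = ((2 * (n₁ : ℤ) : ℤ) : ℝ) by push_cast; ring,
      show (((2 * (n₁ : ℤ) : ℤ) : ℝ) + 2) = ((2 * (n₁ : ℤ) + 2 : ℤ) : ℝ) by push_cast; ring]
  rw [Int.cast_le, Int.cast_le]
  simp only [Nat.even_iff]
  split_ifs with p q q <;>
    simp only [Int.abs_eq_natAbs] <;>
    omega
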